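/- Let M, P₀ ∈ Sym(n,ℝ) with M invertible, P₀ − M positive definite, and let Λ²², Q²² ∈ Sym(n,ℝ) be related by Q²² = M − M(M+Λ²²)⁻¹M where M + Λ²² is negative definite. Let Υ(P₀) = −M − M(P₀−M)⁻¹M. Then Υ(P₀) + Q²² is negative definite if and only if P₀ + Λ²² is negative definite. -/

import Mathlib

open Matrix

/-- Congruence by an invertible matrix preserves positive definiteness (real case). -/
lemma posDef_congr {n : ℕ} {A B : Matrix (Fin n) (Fin n) ℝ}
    (hA : A.PosDef) (hB : IsUnit B) : (B * A * Bᵀ).PosDef := by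
  have hBt : Bᴴ = Bᵀ := by ext i j; simp [conjTranspose_apply]
  refine PosDef.of_dotProduct_mulVec_pos (hBt ▸ isHermitian_mul_mul_conjTranspose B hA.isHermitian) fun x hx => ?_
  have hBt' : IsUnit Bᵀ := (Matrix.isUnit_transpose B).mpr hB
  have hne : Bᵀ *ᵥ x ≠ 0 :=
    (Matrix.mulVec_injective_iff_isUnit.mpr hBt').ne_iff' (by simp) |>.2 hx
  have key : x ⬝ᵥ (B * A * Bᵀ) *ᵥ x = (Bᵀ *ᵥ x) ⬝ᵥ A *ᵥ (Bᵀ *ᵥ x) := by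
    rw [← mulVec_mulVec, ← mulVec_mulVec, dotProduct_mulVec, ← mulVec_transpose]
  have := hA.dotProduct_mulVec_pos hne
  simp only [star_trivial] at this ⊢
  rw [key]; exact this

/-- If `X`, `Y`, and `Y - X` are positive definite, then so is `X⁻¹ - Y⁻¹`. -/
lemma inv_sub_inv_posDef {n : ℕ} {X Y : Matrix (Fin n) (Fin n) ℝ}
    (hX : X.PosDef) (hY : Y.PosDef) (hZ : (Y - X).PosDef) : (X⁻¹ - Y⁻¹).PosDef := by
  have hXd : IsUnit X.det := (Matrix.isUnit_iff_isUnit_det X).mp hX.isUnit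
  have hYd : IsUnit Y.det := (Matrix.isUnit_iff_isUnit_det Y).mp hY.isUnit
  have hXs : Xᵀ = X := by
    have := hX.isHermitian; rwa [Matrix.IsHermitian, conjTranspose_eq_transpose_of_trivial] at this
  have hYs : Yᵀ = Y := by
    have := hY.isHermitian; rwa [Matrix.IsHermitian, conjTranspose_eq_transpose_of_trivial] at this
  have hZt : (Y - X)ᵀ = Y - X := by rw [transpose_sub, hYs, hXs]
  have hYit : (Y⁻¹)ᵀ = Y⁻¹ := by rw [transpose_nonsing_inv, hYs]
  have t2 : (Y⁻¹ * (Y - X)) * X⁻¹ * ((Y - X) * Y⁻¹)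
      = Y⁻¹ * (Y - X) * X⁻¹ - Y⁻¹ * (Y - X) * Y⁻¹ := by
    rw [sub_mul, Matrix.mul_nonsing_inv Y hYd, mul_assoc (Y⁻¹ * (Y - X)) X⁻¹,
      mul_sub X⁻¹, mul_one, ← mul_assoc X⁻¹ X, Matrix.nonsing_inv_mul X hXd, one_mul,
      mul_sub]
  have e1 : Y⁻¹ * (Y - X) * X⁻¹ = X⁻¹ - Y⁻¹ := by
    rw [mul_sub Y⁻¹, Matrix.nonsing_inv_mul Y hYd, sub_mul, one_mul,
      mul_assoc Y⁻¹ X X⁻¹, Matrix.mul_nonsing_inv X hXd, mul_one]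
  have key : X⁻¹ - Y⁻¹
      = Y⁻¹ * (Y - X) * (Y⁻¹)ᵀ + (Y⁻¹ * (Y - X)) * X⁻¹ * (Y⁻¹ * (Y - X))ᵀ := by
    rw [transpose_mul, hZt, hYit, t2, e1]
    abel
  rw [key]
  exact (posDef_congr hZ hY.inv.isUnit).add
    (posDef_congr hX.inv (hY.inv.isUnit.mul hZ.isUnit))

/-- With `Q²² = M − M(M+Λ²²)⁻¹M` and `Υ(P₀) = −M − M(P₀−M)⁻¹M`, one has
`Υ(P₀) + Q²² ≺ 0` if and only if `P₀ + Λ²² ≺ 0`. -/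
theorem Upsilon_add_Q22_negDef_iff {n : ℕ}
    (M P₀ Λ22 : Matrix (Fin n) (Fin n) ℝ)
    (hM : Mᵀ = M) (hMinv : IsUnit M) (hP₀ : P₀ᵀ = P₀) (hΛ22 : Λ22ᵀ = Λ22)
    (hP₀M : (P₀ - M).PosDef) (hMΛ : (-(M + Λ22)).PosDef) :
    (-((-M - M * (P₀ - M)⁻¹ * M) + (M - M * (M + Λ22)⁻¹ * M))).PosDef ↔
      (-(P₀ + Λ22)).PosDef := by
  set X := P₀ - M with hXdef
  set Y := -(M + Λ22) with hYdef
  have hMd : IsUnit M.det := (Matrix.isUnit_iff_isUnit_det M).mp hMinv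
  have hXd : IsUnit X.det := (Matrix.isUnit_iff_isUnit_det X).mp hP₀M.isUnit
  have hYd : IsUnit Y.det := (Matrix.isUnit_iff_isUnit_det Y).mp hMΛ.isUnit
  have hMY : M + Λ22 = -Y := by rw [hYdef, neg_neg]
  have hneginv : (M + Λ22)⁻¹ = -(Y⁻¹) := by
    refine Matrix.inv_eq_right_inv ?_
    rw [hMY, neg_mul, mul_neg, neg_neg, Matrix.mul_nonsing_inv Y hYd]
  have hYX : Y - X = -(P₀ + Λ22) := by rw [hYdef, hXdef]; abel
  have hE : -((-M - M * X⁻¹ * M) + (M - M * (M + Λ22)⁻¹ * M))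
      = M * (X⁻¹ - Y⁻¹) * Mᵀ := by
    rw [hM, hneginv]
    noncomm_ring
  rw [hE]
  constructor
  · intro h
    have h2 := posDef_congr h (Matrix.isUnit_nonsing_inv_iff.mpr hMinv)
    have hcan : M⁻¹ * (M * (X⁻¹ - Y⁻¹) * Mᵀ) * (M⁻¹)ᵀ = X⁻¹ - Y⁻¹ := by
      rw [hM, transpose_nonsing_inv, hM, mul_assoc M (X⁻¹ - Y⁻¹) M,
        ← mul_assoc M⁻¹ M, Matrix.nonsing_inv_mul M hMd, one_mul,
        mul_assoc (X⁻¹ - Y⁻¹) M M⁻¹, Matrix.mul_nonsing_inv M hMd, mul_one]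
    rw [hcan] at h2
    have h3 := inv_sub_inv_posDef hMΛ.inv hP₀M.inv h2
    rw [Matrix.nonsing_inv_nonsing_inv Y hYd, Matrix.nonsing_inv_nonsing_inv X hXd,
      hYX] at h3
    exact h3
  · intro h
    rw [← hYX] at h
    exact posDef_congr (inv_sub_inv_posDef hP₀M hMΛ h) hMinv
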